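/- Fix a direction θ and suppose E satisfies the slice coding condition at θ and that ν_θ is absolutely continuous with essentially bounded density h_θ. Then there exists a constant C<∞ such that h_θ(x) ≤ C·diam(E_{θ,x})^{s−1} for ν_θ-a.e. x∈π_θ(E). -/

import Mathlib

open MeasureTheory Filter Topology Metric
open scoped ENNReal RealInnerProductSpace

noncomputable section

/-- Orthogonal projection onto the line through the origin in the direction of the
unit vector `θ`, identified with `ℝ`. -/
def projLine {n : ℕ} (θ : EuclideanSpace ℝ (Fin n)) (p : EuclideanSpace ℝ (Fin n)) : ℝ :=
  ⟪p, θ⟫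

/-- The slice `E_{θ,x} = E ∩ π_θ⁻¹(x)`. -/
def sliceSet {n : ℕ} (E : Set (EuclideanSpace ℝ (Fin n)))
    (θ : EuclideanSpace ℝ (Fin n)) (x : ℝ) : Set (EuclideanSpace ℝ (Fin n)) :=
  E ∩ projLine θ ⁻¹' {x}

/-- The projection `ν_θ = ν ∘ π_θ⁻¹` of `ν = H^s|_E` onto the line in direction `θ`. -/
def projMeasure {n : ℕ} (s : ℝ) (E : Set (EuclideanSpace ℝ (Fin n)))
    (θ : EuclideanSpace ℝ (Fin n)) : Measure ℝ :=
  Measure.map (projLine θ) (μH[s].restrict E)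

/-- The slice coding condition at direction `θ`: there is `δ > 0` such that every slice
either has diameter greater than `δ` or is contained in a single first-level piece
`S_a(E)` of the attractor. -/
def SliceCodingCond {n l : ℕ} (S : Fin l → EuclideanSpace ℝ (Fin n) → EuclideanSpace ℝ (Fin n))
    (E : Set (EuclideanSpace ℝ (Fin n))) (θ : EuclideanSpace ℝ (Fin n)) : Prop :=
  ∃ δ > (0 : ℝ), ∀ x ∈ projLine θ '' E,
    δ < Metric.diam (sliceSet E θ x) ∨ ∃ i : Fin l, sliceSet E θ x ⊆ S i '' E

/-- `E` is the attractor of the IFS `S₁,…,S_l`: a nonempty compact set with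
`E = ⋃ᵢ Sᵢ(E)`. -/
def IsAttractor {n l : ℕ} (S : Fin l → EuclideanSpace ℝ (Fin n) → EuclideanSpace ℝ (Fin n))
    (E : Set (EuclideanSpace ℝ (Fin n))) : Prop :=
  E.Nonempty ∧ IsCompact E ∧ E = ⋃ i : Fin l, S i '' E

/-- The open set condition for the IFS `S₁,…,S_l`. -/
def OpenSetCond {n l : ℕ}
    (S : Fin l → EuclideanSpace ℝ (Fin n) → EuclideanSpace ℝ (Fin n)) : Prop :=
  ∃ V : Set (EuclideanSpace ℝ (Fin n)), V.Nonempty ∧ IsOpen V ∧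
    (∀ i : Fin l, S i '' V ⊆ V) ∧
    Pairwise fun i j : Fin l => Disjoint (S i '' V) (S j '' V)

/-- Scaling of Lebesgue measure under the preimage of an affine map of `ℝ`. -/
lemma aux_volume_preimage (ρ c : ℝ) (hρ : 0 < ρ) (A : Set ℝ) :
    volume ((fun x => ρ * x + c) ⁻¹' A) = ENNReal.ofReal ρ⁻¹ * volume A := by
  have : (fun x => ρ * x + c) = (· + c) ∘ (ρ * ·) := rfl
  rw [this, Set.preimage_comp, Real.volume_preimage_mul_left hρ.ne',
    measure_preimage_add_right, abs_of_pos (inv_pos.2 hρ)]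

/-- If `E` satisfies the slice coding condition at `θ` and `ν_θ` is
absolutely continuous with essentially bounded density `h_θ`, then there is a constant
`C < ∞` with `h_θ(x) ≤ C·diam(E_{θ,x})^{s-1}` for `ν_θ`-a.e. `x ∈ π_θ(E)`. -/
theorem stmt14 {n l : ℕ} (r : Fin l → ℝ) (hr : ∀ i, r i ∈ Set.Ioo (0 : ℝ) 1)
    (d : Fin l → EuclideanSpace ℝ (Fin n))
    (S : Fin l → EuclideanSpace ℝ (Fin n) → EuclideanSpace ℝ (Fin n))
    (hS : ∀ i x, S i x = r i • x + d i)
    (E : Set (EuclideanSpace ℝ (Fin n))) (hE : IsAttractor S E) (hOSC : OpenSetCond S)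
    (s : ℝ) (hs : 1 < s) (hdim : ∑ i : Fin l, r i ^ s = 1)
    (hpos : 0 < μH[s] E) (hfin : μH[s] E < ⊤)
    (θ : EuclideanSpace ℝ (Fin n)) (hθ : ‖θ‖ = 1)
    (hscc : SliceCodingCond S E θ)
    (h : ℝ → ℝ) (hmeas : Measurable h) (hnonneg : ∀ x, 0 ≤ h x)
    (hdens : projMeasure s E θ = volume.withDensity fun x => ENNReal.ofReal (h x))
    (hbdd : ∃ c : ℝ, ∀ᵐ x ∂(volume : Measure ℝ), h x ≤ c) :
    ∃ C : ℝ, ∀ᵐ x ∂projMeasure s E θ, x ∈ projLine θ '' E →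
      h x ≤ C * Metric.diam (sliceSet E θ x) ^ (s - 1) := by
  classical
  obtain ⟨hne, hcomp, hunion⟩ := hE
  obtain ⟨δ, hδ, hcode⟩ := hscc
  obtain ⟨c, hc⟩ := hbdd
  set c' : ℝ := max c 0 with hc'def
  have hc'0 : (0 : ℝ) ≤ c' := le_max_right c 0
  have hs1 : (0 : ℝ) < s - 1 := by linarith
  have hs0 : (0 : ℝ) ≤ s := by linarith
  -- `Fin l` is nonempty
  have hql : Nonempty (Fin l) := by
    obtain ⟨p, hp⟩ := hne
    rw [hunion] at hp
    obtain ⟨i, -⟩ := Set.mem_iUnion.1 hp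
    exact ⟨i⟩
  -- the projection is continuous
  have hπcont : Continuous (projLine θ) := by
    unfold projLine
    exact continuous_id.inner continuous_const
  have hπmeas : Measurable (projLine θ) := hπcont.measurable
  have hπaff : ∀ (ρ : ℝ) (y dd : EuclideanSpace ℝ (Fin n)),
      projLine θ (ρ • y + dd) = ρ * projLine θ y + projLine θ dd := by
    intro ρ y dd
    unfold projLine
    rw [inner_add_left, real_inner_smul_left]
  -- membership in slices
  have mem_slice : ∀ (p : EuclideanSpace ℝ (Fin n)) (x : ℝ),
      p ∈ sliceSet E θ x ↔ p ∈ E ∧ projLine θ p = x := by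
    intro p x
    simp [sliceSet]
  -- iterated maps
  set Sw : List (Fin l) → EuclideanSpace ℝ (Fin n) → EuclideanSpace ℝ (Fin n) :=
    fun w => w.foldl (fun f i => f ∘ S i) id with hSwdef
  have Sw_comp : ∀ (w : List (Fin l)) (g : EuclideanSpace ℝ (Fin n) → EuclideanSpace ℝ (Fin n)),
      w.foldl (fun f i => f ∘ S i) g = g ∘ Sw w := by
    intro w
    induction w with
    | nil => intro g; rfl
    | cons i w ih =>
      intro g
      show List.foldl _ (g ∘ S i) w = _
      rw [ih (g ∘ S i)]
      have : Sw (i :: w) = (id ∘ S i) ∘ Sw w := by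
        show List.foldl _ (id ∘ S i) w = _
        rw [ih (id ∘ S i)]
      rw [this]
      rfl
  have Sw_cons : ∀ (i : Fin l) (w : List (Fin l)), Sw (i :: w) = S i ∘ Sw w := by
    intro i w
    show List.foldl _ (id ∘ S i) w = _
    rw [Sw_comp w (id ∘ S i)]
    rfl
  have Sw_append : ∀ (w : List (Fin l)) (i : Fin l), Sw (w ++ [i]) = Sw w ∘ S i := by
    intro w i
    show List.foldl _ id (w ++ [i]) = _
    rw [List.foldl_append]
    rfl
  -- products of ratios
  set P : List (Fin l) → ℝ := fun w => (w.map r).prod with hPdef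
  have P_nil : P [] = 1 := rfl
  have P_cons : ∀ (i : Fin l) (w : List (Fin l)), P (i :: w) = r i * P w := by
    intro i w; simp [hPdef]
  have P_pos : ∀ w : List (Fin l), 0 < P w := by
    intro w
    induction w with
    | nil => norm_num [P_nil]
    | cons i w ih => rw [P_cons]; exact mul_pos (hr i).1 ih
  have P_le_one : ∀ w : List (Fin l), P w ≤ 1 := by
    intro w
    induction w with
    | nil => rw [P_nil]
    | cons i w ih =>
      rw [P_cons]
      nlinarith [(hr i).1, (hr i).2, P_pos w]
  -- distances scale under `Sw`
  have hdistS : ∀ (i : Fin l) (a b : EuclideanSpace ℝ (Fin n)),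
      dist (S i a) (S i b) = r i * dist a b := by
    intro i a b
    rw [hS, hS, dist_eq_norm]
    have : (r i • a + d i) - (r i • b + d i) = r i • (a - b) := by
      rw [add_sub_add_right_eq_sub, smul_sub]
    rw [this, norm_smul, Real.norm_eq_abs, abs_of_pos (hr i).1, dist_eq_norm]
  have hdistW : ∀ (w : List (Fin l)) (a b : EuclideanSpace ℝ (Fin n)),
      dist (Sw w a) (Sw w b) = P w * dist a b := by
    intro w
    induction w with
    | nil => intro a b; simp [P_nil, hSwdef]
    | cons i w ih =>
      intro a b
      rw [Sw_cons, Function.comp_apply, Function.comp_apply, hdistS, ih, P_cons, mul_assoc]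
  have hlip : ∀ w : List (Fin l), LipschitzWith (P w).toNNReal (Sw w) := by
    intro w
    apply LipschitzWith.of_dist_le_mul
    intro a b
    rw [hdistW, Real.coe_toNNReal _ (P_pos w).le]
  -- projection of `Sw`
  have hπ0 : projLine θ (0 : EuclideanSpace ℝ (Fin n)) = 0 := by
    simp [projLine]
  have hπW : ∀ (w : List (Fin l)) (p : EuclideanSpace ℝ (Fin n)),
      projLine θ (Sw w p) = P w * projLine θ p + projLine θ (Sw w 0) := by
    intro w
    induction w with
    | nil =>
      intro p
      simp [P_nil, hSwdef, projLine]
    | cons i w ih =>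
      intro p
      rw [Sw_cons, Function.comp_apply, Function.comp_apply, hS, hπaff, ih, ih 0, hS, hπaff,
        P_cons, hπ0]
      ring
  -- pieces are inside E
  have hSiE : ∀ i : Fin l, S i '' E ⊆ E := by
    intro i
    have h1 : S i '' E ⊆ ⋃ j : Fin l, S j '' E := Set.subset_iUnion (fun j => S j '' E) i
    rwa [← hunion] at h1
  have hSwE : ∀ w : List (Fin l), Sw w '' E ⊆ E := by
    intro w
    induction w with
    | nil => intro p hp; simpa [hSwdef] using hp
    | cons i w ih =>
      rw [Sw_cons, Set.image_comp]
      exact (Set.image_mono ih).trans (hSiE i)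
  -- coding sets
  set B : List (Fin l) → Set ℝ :=
    fun w => {x | x ∈ projLine θ '' E ∧ sliceSet E θ x ⊆ Sw w '' E} with hBdef
  -- translation parameter
  set cw : List (Fin l) → ℝ := fun w => projLine θ (Sw w 0) with hcwdef
  -- measurability of coding sets
  have hBmeas : ∀ w : List (Fin l), MeasurableSet (B w) := by
    intro w
    have hK : IsCompact (Sw w '' E) := hcomp.image (hlip w).continuous
    have hKne : (Sw w '' E).Nonempty := hne.image _
    set K := Sw w '' E with hKdef
    have hEK : E \ K = ⋃ m : ℕ, (E ∩ {p | 1 / (m + 1 : ℝ) ≤ infDist p K}) := by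
      ext p
      constructor
      · rintro ⟨hpE, hpK⟩
        have hpos' : 0 < infDist p K := (hK.isClosed.notMem_iff_infDist_pos hKne).1 hpK
        obtain ⟨m, hm⟩ := exists_nat_one_div_lt hpos'
        exact Set.mem_iUnion.2 ⟨m, hpE, hm.le⟩
      · intro hp
        obtain ⟨m, hpE, hm⟩ := Set.mem_iUnion.1 hp
        refine ⟨hpE, fun hpK => ?_⟩
        simp only [Set.mem_setOf_eq] at hm
        have h0' : infDist p K = 0 := infDist_zero_of_mem hpK
        have hpos'' : (0 : ℝ) < 1 / (m + 1 : ℝ) := by positivity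
        linarith
    have hB_eq : B w = (projLine θ '' E) \ (projLine θ '' (E \ K)) := by
      ext x
      simp only [hBdef, Set.mem_setOf_eq, Set.mem_diff]
      constructor
      · rintro ⟨hx, hsl⟩
        refine ⟨hx, fun hmem => ?_⟩
        obtain ⟨p, ⟨hpE, hpK⟩, hpx⟩ := hmem
        exact hpK (hsl ((mem_slice p x).2 ⟨hpE, hpx⟩))
      · rintro ⟨hx, hnmem⟩
        refine ⟨hx, fun p hp => ?_⟩
        obtain ⟨hpE, hpx⟩ := (mem_slice p x).1 hp
        by_contra hpK
        exact hnmem ⟨p, ⟨hpE, hpK⟩, hpx⟩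
    rw [hB_eq]
    refine ((hcomp.image hπcont).measurableSet).diff ?_
    rw [hEK, Set.image_iUnion]
    refine MeasurableSet.iUnion fun m => ?_
    exact ((hcomp.inter_right (isClosed_le continuous_const (continuous_infDist_pt K))).image
      hπcont).measurableSet
  -- slices over coding sets are rescaled slices
  have hslice : ∀ (w : List (Fin l)) (x : ℝ), x ∈ B w →
      sliceSet E θ x = Sw w '' sliceSet E θ ((x - cw w) / P w) := by
    intro w x hx
    obtain ⟨hxE, hsub⟩ := hx
    ext p
    constructor
    · intro hp
      obtain ⟨q, hqE, rfl⟩ := hsub hp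
      refine ⟨q, (mem_slice q _).2 ⟨hqE, ?_⟩, rfl⟩
      have hpx := ((mem_slice _ x).1 hp).2
      rw [hπW] at hpx
      have hcw : cw w = projLine θ (Sw w 0) := rfl
      rw [eq_div_iff (P_pos w).ne', hcw]
      linarith [hpx]
    · rintro ⟨q, hq, rfl⟩
      obtain ⟨hqE, hqx⟩ := (mem_slice q _).1 hq
      refine (mem_slice _ x).2 ⟨hSwE w ⟨q, hqE, rfl⟩, ?_⟩
      rw [hπW, hqx]
      have hcw : cw w = projLine θ (Sw w 0) := rfl
      rw [← hcw]
      field_simp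
      rw [mul_div_cancel_left₀ _ (P_pos w).ne']
      ring
  -- preimages of coding points are in the projection of E
  have hmem' : ∀ (w : List (Fin l)) (x : ℝ), x ∈ B w →
      (x - cw w) / P w ∈ projLine θ '' E := by
    intro w x hx
    obtain ⟨p, hpE, hpx⟩ := hx.1
    have hp : p ∈ sliceSet E θ x := (mem_slice p x).2 ⟨hpE, hpx⟩
    rw [hslice w x hx] at hp
    obtain ⟨q, hq, -⟩ := hp
    obtain ⟨hqE, hqx⟩ := (mem_slice q _).1 hq
    exact ⟨q, hqE, hqx⟩
  -- diameters scale
  have hdiam_le : ∀ (w : List (Fin l)) (x : ℝ), x ∈ B w →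
      P w * Metric.diam (sliceSet E θ ((x - cw w) / P w)) ≤ Metric.diam (sliceSet E θ x) := by
    intro w x hx
    have him := (hslice w x hx).symm
    have hbnd : Bornology.IsBounded (sliceSet E θ x) := hcomp.isBounded.subset Set.inter_subset_left
    have hA : Metric.diam (sliceSet E θ ((x - cw w) / P w)) ≤
        (P w)⁻¹ * Metric.diam (sliceSet E θ x) := by
      apply Metric.diam_le_of_forall_dist_le
      · exact mul_nonneg (inv_nonneg.2 (P_pos w).le) Metric.diam_nonneg
      · intro a ha b hb
        have h1 : dist (Sw w a) (Sw w b) ≤ Metric.diam (sliceSet E θ x) := by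
          apply Metric.dist_le_diam_of_mem hbnd
          · rw [← him]; exact Set.mem_image_of_mem _ ha
          · rw [← him]; exact Set.mem_image_of_mem _ hb
        rw [hdistW] at h1
        rw [← mul_le_mul_iff_right₀ (P_pos w)]
        calc P w * dist a b ≤ Metric.diam (sliceSet E θ x) := h1
          _ = P w * ((P w)⁻¹ * Metric.diam (sliceSet E θ x)) := by
              field_simp
              rw [mul_div_cancel_right₀ _ (P_pos w).ne']
    calc P w * Metric.diam (sliceSet E θ ((x - cw w) / P w))
        ≤ P w * ((P w)⁻¹ * Metric.diam (sliceSet E θ x)) :=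
          mul_le_mul_of_nonneg_left hA (P_pos w).le
      _ = Metric.diam (sliceSet E θ x) := by
          field_simp
          rw [mul_div_cancel_left₀ _ (P_pos w).ne']
  -- the coding iteration
  have hcoding : ∀ (k : ℕ) (x : ℝ), x ∈ projLine θ '' E →
      (∃ w, x ∈ B w ∧ δ * P w < Metric.diam (sliceSet E θ x)) ∨
      (∃ w, w.length = k ∧ x ∈ B w) := by
    intro k
    induction k with
    | zero =>
      intro x hx
      right
      refine ⟨[], rfl, hx, fun p hp => ?_⟩
      show p ∈ Sw [] '' E
      have : Sw [] '' E = E := by simp [hSwdef]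
      rw [this]
      exact hp.1
    | succ k ih =>
      intro x hx
      rcases ih x hx with hterm | ⟨w, hlen, hBw⟩
      · exact Or.inl hterm
      · set x' := (x - cw w) / P w with hx'def
        have hx' := hmem' w x hBw
        rcases hcode x' hx' with hbig | ⟨i, hi⟩
        · left
          refine ⟨w, hBw, ?_⟩
          calc δ * P w < Metric.diam (sliceSet E θ x') * P w := by
                apply mul_lt_mul_of_pos_right hbig (P_pos w)
            _ = P w * Metric.diam (sliceSet E θ x') := mul_comm _ _
            _ ≤ Metric.diam (sliceSet E θ x) := hdiam_le w x hBw
        · right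
          refine ⟨w ++ [i], by simp [hlen], hx, ?_⟩
          rw [hslice w x hBw]
          rintro p ⟨q, hq, rfl⟩
          have hq' : q ∈ S i '' E := hi hq
          rw [Sw_append, Set.image_comp]
          exact Set.mem_image_of_mem _ hq'
  -- the projected measure applied to measurable sets
  have hνA : ∀ M : Set ℝ, MeasurableSet M →
      projMeasure s E θ M = μH[s] (projLine θ ⁻¹' M ∩ E) := by
    intro M hM
    rw [projMeasure, Measure.map_apply hπmeas hM, Measure.restrict_apply (hπmeas hM)]
  have hν_le : ∀ M : Set ℝ, MeasurableSet M →
      projMeasure s E θ M ≤ ENNReal.ofReal c' * volume M := by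
    intro M hM
    rw [hdens, withDensity_apply _ hM]
    calc ∫⁻ x in M, ENNReal.ofReal (h x) ∂volume
        ≤ ∫⁻ _ in M, ENNReal.ofReal c' ∂volume := by
          apply lintegral_mono_ae
          apply ae_restrict_of_ae
          filter_upwards [hc] with x hx
          exact ENNReal.ofReal_le_ofReal (hx.trans (le_max_left c 0))
      _ = ENNReal.ofReal c' * volume M := by rw [setLIntegral_const]
  -- the key density bound on each coding set
  have hA : ∀ w : List (Fin l), ∀ᵐ x ∂(volume : Measure ℝ),
      x ∈ B w → h x ≤ c' * P w ^ (s - 1) := by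
    intro w
    set t : ℝ≥0∞ := ENNReal.ofReal (c' * P w ^ (s - 1)) with htdef
    have key : (fun x => (B w).indicator (fun y => ENNReal.ofReal (h y)) x)
        ≤ᵐ[(volume : Measure ℝ)] fun _ => t := by
      apply ae_le_of_forall_setLIntegral_le_of_sigmaFinite
        (hmeas.ennreal_ofReal.indicator (hBmeas w))
      intro A hAmeas hAfin
      have l1 : ∫⁻ x in A, (B w).indicator (fun y => ENNReal.ofReal (h y)) x ∂volume
          = projMeasure s E θ (B w ∩ A) := by
        rw [← lintegral_indicator hAmeas, Set.indicator_indicator,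
          lintegral_indicator (hAmeas.inter (hBmeas w)), ← withDensity_apply _
          (hAmeas.inter (hBmeas w)), ← hdens, Set.inter_comm]
      rw [l1]
      set Tpre : Set ℝ := (fun y => P w * y + cw w) ⁻¹' A with hTpredef
      have hTmeas : Measurable fun y : ℝ => P w * y + cw w :=
        (measurable_id.const_mul (P w)).add_const (cw w)
      have hTpre_meas : MeasurableSet Tpre := hTmeas hAmeas
      have step2 : projLine θ ⁻¹' (B w ∩ A) ∩ E ⊆ Sw w '' (E ∩ projLine θ ⁻¹' Tpre) := by
        rintro p ⟨hpre, hpE⟩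
        obtain ⟨⟨hxE, hsub⟩, hpA⟩ := hpre
        have hp : p ∈ sliceSet E θ (projLine θ p) := (mem_slice p _).2 ⟨hpE, rfl⟩
        obtain ⟨q, hqE, rfl⟩ := hsub hp
        refine ⟨q, ⟨hqE, ?_⟩, rfl⟩
        show P w * projLine θ q + cw w ∈ A
        rw [← hπW]
        exact hpA
      have step3 : μH[s] (Sw w '' (E ∩ projLine θ ⁻¹' Tpre)) ≤
          (ENNReal.ofReal (P w)) ^ s * μH[s] (E ∩ projLine θ ⁻¹' Tpre) :=
        (hlip w).hausdorffMeasure_image_le hs0 _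
      have step4 : μH[s] (E ∩ projLine θ ⁻¹' Tpre) = projMeasure s E θ Tpre := by
        rw [hνA Tpre hTpre_meas, Set.inter_comm]
      calc projMeasure s E θ (B w ∩ A)
          = μH[s] (projLine θ ⁻¹' (B w ∩ A) ∩ E) := hνA _ ((hBmeas w).inter hAmeas)
        _ ≤ μH[s] (Sw w '' (E ∩ projLine θ ⁻¹' Tpre)) := measure_mono step2
        _ ≤ (ENNReal.ofReal (P w)) ^ s * μH[s] (E ∩ projLine θ ⁻¹' Tpre) := step3
        _ = (ENNReal.ofReal (P w)) ^ s * projMeasure s E θ Tpre := by rw [step4]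
        _ ≤ (ENNReal.ofReal (P w)) ^ s * (ENNReal.ofReal c' * volume Tpre) := by
            exact mul_le_mul_right (hν_le Tpre hTpre_meas) _
        _ = (ENNReal.ofReal (P w)) ^ s *
              (ENNReal.ofReal c' * (ENNReal.ofReal (P w)⁻¹ * volume A)) := by
            rw [hTpredef, aux_volume_preimage _ _ (P_pos w)]
        _ = t * volume A := by
            rw [htdef, ENNReal.ofReal_rpow_of_pos (P_pos w)]
            rw [← mul_assoc, ← mul_assoc, ← ENNReal.ofReal_mul (Real.rpow_nonneg (P_pos w).le s),
              ← ENNReal.ofReal_mul (mul_nonneg (Real.rpow_nonneg (P_pos w).le s) hc'0)]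
            congr 2
            rw [Real.rpow_sub (P_pos w), Real.rpow_one]
            ring
        _ = ∫⁻ _ in A, t ∂volume := by rw [setLIntegral_const]
    filter_upwards [key] with x hx hxB
    rw [Set.indicator_of_mem hxB] at hx
    exact (ENNReal.ofReal_le_ofReal_iff
      (mul_nonneg hc'0 (Real.rpow_nonneg (P_pos w).le _))).1 hx
  -- combine over all words
  have hAll : ∀ᵐ x ∂(volume : Measure ℝ), ∀ w : List (Fin l),
      x ∈ B w → h x ≤ c' * P w ^ (s - 1) := ae_all_iff.2 hA
  have hac : projMeasure s E θ ≪ (volume : Measure ℝ) := by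
    rw [hdens]
    exact withDensity_absolutelyContinuous _ _
  have hAllν : ∀ᵐ x ∂projMeasure s E θ, ∀ w : List (Fin l),
      x ∈ B w → h x ≤ c' * P w ^ (s - 1) := hAll.filter_mono hac.ae_le
  -- the maximal contraction ratio
  haveI := hql
  set q : ℝ := Finset.univ.sup' Finset.univ_nonempty r with hqdef
  have hq1 : q < 1 := (Finset.sup'_lt_iff Finset.univ_nonempty).2 fun i _ => (hr i).2
  have hq0 : 0 < q := by
    obtain ⟨i0⟩ := hql
    exact lt_of_lt_of_le (hr i0).1 (Finset.le_sup' r (Finset.mem_univ i0))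
  have hPq : ∀ w : List (Fin l), P w ≤ q ^ w.length := by
    intro w
    induction w with
    | nil => simp [P_nil]
    | cons i w ih =>
      rw [P_cons, List.length_cons, pow_succ']
      exact mul_le_mul (Finset.le_sup' r (Finset.mem_univ i)) ih (P_pos w).le hq0.le
  -- conclusion
  refine ⟨c' / δ ^ (s - 1), ?_⟩
  filter_upwards [hAllν] with x hx hxE
  by_cases hterm : ∃ w, x ∈ B w ∧ δ * P w < Metric.diam (sliceSet E θ x)
  · obtain ⟨w, hBw, hlt⟩ := hterm
    have h1 : h x ≤ c' * P w ^ (s - 1) := hx w hBw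
    have hδP : (0 : ℝ) ≤ δ * P w := (mul_pos hδ (P_pos w)).le
    have h2 : (δ * P w) ^ (s - 1) ≤ Metric.diam (sliceSet E θ x) ^ (s - 1) :=
      Real.rpow_le_rpow hδP hlt.le hs1.le
    have h3 : (δ * P w) ^ (s - 1) = δ ^ (s - 1) * P w ^ (s - 1) :=
      Real.mul_rpow hδ.le (P_pos w).le
    have hδs : (0 : ℝ) < δ ^ (s - 1) := Real.rpow_pos_of_pos hδ _
    calc h x ≤ c' * P w ^ (s - 1) := h1
      _ = c' / δ ^ (s - 1) * (δ ^ (s - 1) * P w ^ (s - 1)) := by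
          field_simp
      _ ≤ c' / δ ^ (s - 1) * Metric.diam (sliceSet E θ x) ^ (s - 1) := by
          apply mul_le_mul_of_nonneg_left _ (div_nonneg hc'0 hδs.le)
          rw [← h3]; exact h2
  · have hinf : ∀ k : ℕ, ∃ w, w.length = k ∧ x ∈ B w := by
      intro k
      exact (hcoding k x hxE).resolve_left hterm
    have hqs : q ^ (s - 1) < 1 := Real.rpow_lt_one hq0.le hq1 hs1
    have hqs0 : (0 : ℝ) ≤ q ^ (s - 1) := Real.rpow_nonneg hq0.le _
    have step : ∀ k : ℕ, h x ≤ c' * (q ^ (s - 1)) ^ k := by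
      intro k
      obtain ⟨w, hlen, hBw⟩ := hinf k
      refine (hx w hBw).trans (mul_le_mul_of_nonneg_left ?_ hc'0)
      calc P w ^ (s - 1) ≤ (q ^ k) ^ (s - 1) := by
            apply Real.rpow_le_rpow (P_pos w).le _ hs1.le
            rw [← hlen]; exact hPq w
        _ = (q ^ (s - 1)) ^ k := by
            rw [← Real.rpow_natCast q k, ← Real.rpow_natCast (q ^ (s - 1)) k,
              ← Real.rpow_mul hq0.le, ← Real.rpow_mul hq0.le]
            congr 1
            ring
    have hlim : Tendsto (fun k : ℕ => c' * (q ^ (s - 1)) ^ k) atTop (nhds 0) := by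
      have := tendsto_pow_atTop_nhds_zero_of_lt_one hqs0 hqs
      simpa using this.const_mul c'
    have h0 : h x ≤ 0 := ge_of_tendsto' hlim step
    have hx0 : h x = 0 := le_antisymm h0 (hnonneg x)
    rw [hx0]
    have := Metric.diam_nonneg (s := sliceSet E θ x)
    exact mul_nonneg (div_nonneg hc'0 (Real.rpow_pos_of_pos hδ _).le)
      (Real.rpow_nonneg this _)
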